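/- Define Ψ : [0,∞) → [0,∞] by Ψ(x) = sup{⌊t⌋·log(1 + x/t²) : t ≥ 1}. Then Ψ(x) ≥ (log 5 / 4)·min(x, √x) for all x ≥ 0. -/

import Mathlib

/-- Lemma `technique`: the function `Ψ(x) = sup {⌊t⌋ log(1 + x/t²) : t ≥ 1}` satisfies
`Ψ(x) ≥ (log 5 / 4) min(x, √x)` for all `x ≥ 0`. -/
theorem stmt10 (x : ℝ) (hx : 0 ≤ x) :
    Real.log 5 / 4 * min x (Real.sqrt x) ≤
      sSup {y : ℝ | ∃ t : ℝ, 1 ≤ t ∧ y = (⌊t⌋ : ℝ) * Real.log (1 + x / t ^ 2)} := by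
  have hlog5 : 0 ≤ Real.log 5 := Real.log_nonneg (by norm_num)
  -- the set is bounded above by x
  have hbdd : BddAbove {y : ℝ | ∃ t : ℝ, 1 ≤ t ∧ y = (⌊t⌋ : ℝ) * Real.log (1 + x / t ^ 2)} := by
    refine ⟨x, ?_⟩
    rintro y ⟨t, ht, rfl⟩
    have ht0 : (0:ℝ) < t := lt_of_lt_of_le one_pos ht
    have hu : 0 ≤ x / t ^ 2 := div_nonneg hx (by positivity)
    have hlog : Real.log (1 + x / t ^ 2) ≤ x / t ^ 2 := by
      have := Real.log_le_sub_one_of_pos (by linarith : (0:ℝ) < 1 + x / t ^ 2)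
      linarith
    have hfloor : (⌊t⌋ : ℝ) ≤ t := Int.floor_le t
    calc (⌊t⌋ : ℝ) * Real.log (1 + x / t ^ 2) ≤ t * (x / t ^ 2) :=
          mul_le_mul hfloor hlog (Real.log_nonneg (by linarith)) (le_of_lt ht0)
      _ = x / t := by field_simp
      _ ≤ x := div_le_self hx ht
  -- concavity of log: for 0 ≤ z ≤ 4, z/4 * log 5 ≤ log (1+z)
  have hconc : ∀ z : ℝ, 0 ≤ z → z ≤ 4 → z / 4 * Real.log 5 ≤ Real.log (1 + z) := by
    intro z hz hz4
    have h := (strictConcaveOn_log_Ioi.concaveOn).2 (Set.mem_Ioi.mpr one_pos)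
      (Set.mem_Ioi.mpr (by norm_num : (0:ℝ) < 5)) (by linarith : (0:ℝ) ≤ 1 - z / 4)
      (by linarith : (0:ℝ) ≤ z / 4) (by ring)
    simp only [smul_eq_mul, Real.log_one] at h
    have he : (1 - z / 4) * 1 + z / 4 * 5 = 1 + z := by ring
    rw [he] at h
    linarith
  rcases le_or_gt x 4 with hx4 | hx4
  · -- use t = 1
    have hmem : Real.log (1 + x) ∈
        {y : ℝ | ∃ t : ℝ, 1 ≤ t ∧ y = (⌊t⌋ : ℝ) * Real.log (1 + x / t ^ 2)} := by
      refine ⟨1, le_refl 1, ?_⟩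
      norm_num
    have hle := le_csSup hbdd hmem
    have hmin : min x (Real.sqrt x) ≤ x := min_le_left _ _
    have h1 : Real.log 5 / 4 * min x (Real.sqrt x) ≤ Real.log 5 / 4 * x := by
      apply mul_le_mul_of_nonneg_left hmin (by positivity)
    have h2 := hconc x hx hx4
    linarith
  · -- use t = √x / 2
    set s := Real.sqrt x with hs
    have hs0 : 0 ≤ s := Real.sqrt_nonneg x
    have hs2 : (2:ℝ) < s := by
      have : Real.sqrt 4 < Real.sqrt x := Real.sqrt_lt_sqrt (by norm_num) hx4
      have h4 : Real.sqrt 4 = 2 := by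
        rw [show (4:ℝ) = 2 ^ 2 by norm_num, Real.sqrt_sq (by norm_num : (0:ℝ) ≤ 2)]
      linarith [this, h4.symm ▸ this]
    have hssq : s ^ 2 = x := Real.sq_sqrt hx
    have ht1 : (1:ℝ) ≤ s / 2 := by linarith
    have htsq : (s / 2) ^ 2 = x / 4 := by rw [div_pow]; rw [hssq]; norm_num
    have hx0 : 0 < x := by linarith
    have hmem : (⌊s / 2⌋ : ℝ) * Real.log 5 ∈
        {y : ℝ | ∃ t : ℝ, 1 ≤ t ∧ y = (⌊t⌋ : ℝ) * Real.log (1 + x / t ^ 2)} := by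
      refine ⟨s / 2, ht1, ?_⟩
      rw [htsq]
      have : x / (x / 4) = 4 := by field_simp
      rw [this]
      norm_num
    have hle := le_csSup hbdd hmem
    -- ⌊s/2⌋ ≥ s/4
    have hfloor : s / 4 ≤ (⌊s / 2⌋ : ℝ) := by
      rcases le_total (s / 2) 2 with h | h
      · have h1 : (1:ℤ) ≤ ⌊s / 2⌋ := Int.le_floor.mpr (by exact_mod_cast ht1)
        have h1' : (1:ℝ) ≤ (⌊s / 2⌋ : ℝ) := by exact_mod_cast h1
        linarith
      · have := Int.sub_one_lt_floor (s / 2)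
        linarith
    -- min x √x = √x since x ≥ 1 here
    have hminx : min x (Real.sqrt x) = s :=
      min_eq_right (by nlinarith [hssq, hs2] : Real.sqrt x ≤ x)
    rw [hminx]
    have : Real.log 5 / 4 * s ≤ (⌊s / 2⌋ : ℝ) * Real.log 5 := by
      have := mul_le_mul_of_nonneg_right hfloor hlog5
      linarith [this]
    linarith
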